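/- For any word W of finite length over an alphabet D (a word being a finite sequence of letters a or a^{-1} for a ∈ D), W represents the identity element of the free group on D if and only if there exists a noncrossing inverse pairing Γ on the index set of W whose union is the whole index set; here a noncrossing inverse pairing is a collection of disjoint two-element subsets {i,j} of indices with W(i) = W(j)^{-1}, such that no two pairs {i₀,j₀}, {i₁,j₁} with i₀<j₀, i₁<j₁ cross (i.e. we never have i₀<i₁<j₀<j₁), and such that every index between the two elements of a pair is itself covered by some pair. -/

import Mathlib

/-! Noncrossing inverse pairings on finite words: a finite word over an alphabet `D`
(a list of letters `(a, tt)` = `a` or `(a, ff)` = `a⁻¹`) represents the identity of the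
free group on `D` iff it admits a noncrossing inverse pairing covering all indices. -/

namespace EarringPaper

variable {D : Type*}

/-- A letter over the alphabet `D`: a generator together with a sign. -/
abbrev Letter (D : Type*) := D × Bool

/-- `x` and `y` are formal inverses of each other. -/
def IsInvLetter (x y : Letter D) : Prop := x.1 = y.1 ∧ x.2 = !y.2

/-- A noncrossing inverse pairing on the word `W`, presented as a set of ordered pairs
`(i, j)` of indices with `i < j`. -/
structure NCIP (W : List (Letter D)) (Γ : Set (Fin W.length × Fin W.length)) : Prop where
  /-- pairs are recorded with the smaller index first -/
  lt : ∀ p ∈ Γ, p.1 < p.2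
  /-- paired letters are formal inverses -/
  inv : ∀ p ∈ Γ, IsInvLetter (W.get p.1) (W.get p.2)
  /-- distinct pairs are disjoint -/
  disj : ∀ p ∈ Γ, ∀ q ∈ Γ, p ≠ q → p.1 ≠ q.1 ∧ p.1 ≠ q.2 ∧ p.2 ≠ q.1 ∧ p.2 ≠ q.2
  /-- no two pairs cross: never `i₀ < i₁ < j₀ < j₁` -/
  noncross : ∀ p ∈ Γ, ∀ q ∈ Γ, ¬(p.1 < q.1 ∧ q.1 < p.2 ∧ p.2 < q.2)
  /-- every index lying between the two elements of a pair is covered by some pair -/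
  covered : ∀ p ∈ Γ, ∀ k, p.1 ≤ k → k ≤ p.2 → ∃ q ∈ Γ, q.1 = k ∨ q.2 = k

/-- ℕ-indexed version of a full noncrossing inverse pairing. -/
def GoodN (W : List (Letter D)) (Γ : Set (ℕ × ℕ)) : Prop :=
  (∀ p ∈ Γ, p.1 < p.2 ∧ p.2 < W.length) ∧
  (∀ p ∈ Γ, ∃ x y, W[p.1]? = some x ∧ W[p.2]? = some y ∧ IsInvLetter x y) ∧
  (∀ p ∈ Γ, ∀ q ∈ Γ, p ≠ q → p.1 ≠ q.1 ∧ p.1 ≠ q.2 ∧ p.2 ≠ q.1 ∧ p.2 ≠ q.2) ∧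
  (∀ p ∈ Γ, ∀ q ∈ Γ, ¬(p.1 < q.1 ∧ q.1 < p.2 ∧ p.2 < q.2)) ∧
  (∀ k < W.length, ∃ p ∈ Γ, p.1 = k ∨ p.2 = k)

/-- Inserting an adjacent inverse pair into a word with a full pairing. -/
lemma goodN_insert (L₁ L₂ : List (Letter D)) (x : D) (b : Bool) (Γ : Set (ℕ × ℕ))
    (h : GoodN (L₁ ++ L₂) Γ) :
    ∃ Γ', GoodN (L₁ ++ (x, b) :: (x, !b) :: L₂) Γ' := by
  obtain ⟨hlt, hinv, hdisj, hnc, hcov⟩ := h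
  set n := L₁.length with hn
  set f : ℕ → ℕ := fun k => if k < n then k else k + 2 with hf
  have hmono : ∀ a b : ℕ, a < b → f a < f b := by
    intro a b hab; simp only [hf]; split_ifs <;> omega
  have hinj : ∀ a b : ℕ, f a = f b → a = b := by
    intro a b hab; simp only [hf] at hab; split_ifs at hab <;> omega
  have hrange : ∀ a : ℕ, f a ≠ n ∧ f a ≠ n + 1 := by
    intro a; constructor <;> · simp only [hf]; split_ifs <;> omega
  have hget : ∀ k, (L₁ ++ (x, b) :: (x, !b) :: L₂)[f k]? = (L₁ ++ L₂)[k]? := by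
    intro k
    simp only [hf]
    split_ifs with hk
    · rw [List.getElem?_append_left hk, List.getElem?_append_left hk]
    · push_neg at hk
      rw [List.getElem?_append_right (by omega), List.getElem?_append_right (by omega)]
      have h2 : k + 2 - n = (k - n) + 2 := by omega
      rw [h2]
      simp [hn]
  refine ⟨(Prod.map f f) '' Γ ∪ {(n, n + 1)}, ?_, ?_, ?_, ?_, ?_⟩
  · rintro p (⟨q, hq, rfl⟩ | hp)
    · have := hlt q hq
      have := hmono q.1 q.2 this.1
      constructor
      · exact this
      · simp only [Prod.map, List.length_append, List.length_cons, hf]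
        split_ifs <;> simp only [List.length_append] at * <;> omega
    · simp only [Set.mem_singleton_iff] at hp
      subst hp
      simp only [List.length_append, List.length_cons]
      omega
  · rintro p (⟨q, hq, rfl⟩ | hp)
    · obtain ⟨u, v, hu, hv, huv⟩ := hinv q hq
      exact ⟨u, v, by rw [Prod.map_fst, hget]; exact hu, by rw [Prod.map_snd, hget]; exact hv, huv⟩
    · simp only [Set.mem_singleton_iff] at hp
      subst hp
      refine ⟨(x, b), (x, !b), ?_, ?_, rfl, by simp⟩
      · rw [List.getElem?_append_right (by omega)]
        simp [hn]
      · rw [List.getElem?_append_right (by omega)]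
        have : n + 1 - n = 1 := by omega
        rw [this]; simp
  · rintro p (⟨q, hq, rfl⟩ | hp) r (⟨s, hs, rfl⟩ | hr) hpr
    · have hqs : q ≠ s := by rintro rfl; exact hpr rfl
      have := hdisj q hq s hs hqs
      refine ⟨fun h => ?_, fun h => ?_, fun h => ?_, fun h => ?_⟩ <;>
        simp only [Prod.map_fst, Prod.map_snd] at h <;>
        [exact this.1 (hinj _ _ h); exact this.2.1 (hinj _ _ h);
         exact this.2.2.1 (hinj _ _ h); exact this.2.2.2 (hinj _ _ h)]
    · simp only [Set.mem_singleton_iff] at hr; subst hr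
      exact ⟨(hrange _).1, (hrange _).2, (hrange _).1, (hrange _).2⟩
    · simp only [Set.mem_singleton_iff] at hp; subst hp
      exact ⟨fun h => (hrange _).1 h.symm, fun h => (hrange _).1 h.symm,
        fun h => (hrange _).2 h.symm, fun h => (hrange _).2 h.symm⟩
    · simp only [Set.mem_singleton_iff] at hp hr; subst hp; subst hr; exact absurd rfl hpr
  · rintro p (⟨q, hq, rfl⟩ | hp) r (⟨s, hs, rfl⟩ | hr)
    · simp only [Prod.map_fst, Prod.map_snd]
      rintro ⟨h1, h2, h3⟩
      refine hnc q hq s hs ⟨?_, ?_, ?_⟩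
      · by_contra h; push_neg at h
        rcases eq_or_lt_of_le h with h | h
        · rw [h] at h1; omega
        · exact absurd (hmono _ _ h) (by omega)
      · by_contra h; push_neg at h
        rcases eq_or_lt_of_le h with h | h
        · rw [h] at h2; omega
        · exact absurd (hmono _ _ h) (by omega)
      · by_contra h; push_neg at h
        rcases eq_or_lt_of_le h with h | h
        · rw [h] at h3; omega
        · exact absurd (hmono _ _ h) (by omega)
    · simp only [Set.mem_singleton_iff] at hr; subst hr
      have h1 := hrange (q.1)
      have h2 := hrange (q.2)
      simp only [Prod.map_fst, Prod.map_snd]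
      have : f q.1 < n ∨ n + 2 ≤ f q.1 := by simp only [hf]; split_ifs <;> omega
      omega
    · simp only [Set.mem_singleton_iff] at hp; subst hp
      have h1 := hrange (s.1)
      have : f s.1 < n ∨ n + 2 ≤ f s.1 := by simp only [hf]; split_ifs <;> omega
      simp only [Prod.map_fst, Prod.map_snd]
      omega
    · simp only [Set.mem_singleton_iff] at hp hr; subst hp; subst hr; omega
  · intro k hk
    simp only [List.length_append, List.length_cons] at hk
    rcases lt_trichotomy k n with hkn | hkn | hkn
    · obtain ⟨p, hp, hpk⟩ := hcov k (by simp only [List.length_append]; omega)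
      refine ⟨Prod.map f f p, Or.inl ⟨p, hp, rfl⟩, ?_⟩
      rcases hpk with h | h
      · left; simp only [Prod.map_fst, hf, h, if_pos hkn]
      · right; simp only [Prod.map_snd, hf, h, if_pos hkn]
    · exact ⟨(n, n + 1), Or.inr rfl, Or.inl hkn.symm⟩
    · rcases eq_or_lt_of_le (Nat.succ_le_of_lt hkn) with hkn' | hkn'
      · exact ⟨(n, n + 1), Or.inr rfl, Or.inr (by omega)⟩
      · obtain ⟨p, hp, hpk⟩ := hcov (k - 2) (by simp only [List.length_append]; omega)
        refine ⟨Prod.map f f p, Or.inl ⟨p, hp, rfl⟩, ?_⟩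
        rcases hpk with h | h
        · left; simp only [Prod.map_fst, hf, h]; split_ifs <;> omega
        · right; simp only [Prod.map_snd, hf, h]; split_ifs <;> omega

/-- A word with a full noncrossing inverse pairing represents the identity. -/
lemma goodN_eq_one : ∀ n : ℕ, ∀ W : List (Letter D), W.length = n →
    ∀ Γ : Set (ℕ × ℕ), GoodN W Γ → FreeGroup.mk W = 1 := by
  intro n
  induction n using Nat.strong_induction_on with
  | _ n ih =>
    intro W hWn Γ hG
    obtain ⟨hlt, hinv, hdisj, hnc, hcov⟩ := hG
    rcases Nat.eq_zero_or_pos n with hn0 | hn0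
    · subst hWn
      rw [List.length_eq_zero_iff.mp hn0]
      rfl
    -- pick a pair with minimal gap
    have hne : {m : ℕ | ∃ p ∈ Γ, p.2 - p.1 = m}.Nonempty := by
      obtain ⟨p, hp, -⟩ := hcov 0 (by omega)
      exact ⟨p.2 - p.1, p, hp, rfl⟩
    obtain ⟨m, ⟨p, hp, hpm⟩, hmin⟩ := Nat.lt_wfRel.wf.has_min _ hne
    have hplt := hlt p hp
    -- the minimal pair is adjacent
    have hadj : p.2 = p.1 + 1 := by
      by_contra hne2
      have h12 : p.1 + 1 < p.2 := by omega
      obtain ⟨q, hq, hqk⟩ := hcov (p.1 + 1) (by omega)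
      have hqlt := hlt q hq
      have hqp : q ≠ p := by
        rintro rfl
        rcases hqk with h | h <;> omega
      have hd := hdisj q hq p hp hqp
      rcases hqk with h | h
      · -- q.1 = p.1 + 1
        have hq2 : q.2 < p.2 := by
          have := hnc p hp q hq
          rcases lt_trichotomy q.2 p.2 with h' | h' | h'
          · exact h'
          · exact absurd h' hd.2.2.2
          · exact absurd ⟨by omega, by omega, h'⟩ this
        exact hmin (q.2 - q.1) ⟨q, hq, rfl⟩ (show q.2 - q.1 < m by omega)
      · -- q.2 = p.1 + 1
        have hq1 : q.1 < p.1 := by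
          have : q.1 ≠ p.1 := hd.1
          omega
        exact hnc q hq p hp ⟨by omega, by omega, by omega⟩
    -- decompose the word
    set i := p.1 with hi
    obtain ⟨u, v, hu, hv, huv⟩ := hinv p hp
    have hi2 : i + 1 < W.length := by
      have := (hlt p hp).2
      omega
    obtain ⟨hu1, hu2⟩ := List.getElem?_eq_some_iff.mp hu
    rw [hadj] at hv
    obtain ⟨hv1, hv2⟩ := List.getElem?_eq_some_iff.mp hv
    have hdecomp : W = W.take i ++ u :: v :: W.drop (i + 2) := by
      conv_lhs => rw [← List.take_append_drop i W]
      congr 1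
      rw [List.drop_eq_getElem_cons hu1, hu2, List.drop_eq_getElem_cons hv1, hv2]
    -- the shorter word
    set W' := W.take i ++ W.drop (i + 2) with hW'
    have hlen' : W'.length = W.length - 2 := by
      simp only [hW', List.length_append, List.length_take, List.length_drop]
      omega
    have hmkeq : FreeGroup.mk W = FreeGroup.mk W' := by
      obtain ⟨a, s⟩ := v
      obtain ⟨huv1, huv2⟩ := huv
      have hu' : u = (a, !s) := by
        obtain ⟨a', s'⟩ := u
        simp only at huv1 huv2
        rw [huv1, huv2]
      rw [hdecomp, hu']
      exact Quot.sound FreeGroup.Red.Step.not_rev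
    -- transfer the pairing
    set g : ℕ → ℕ := fun k => if k < i then k else k - 2 with hg
    have havoid : ∀ q ∈ Γ, q ≠ p → q.1 ≠ i ∧ q.1 ≠ i + 1 ∧ q.2 ≠ i ∧ q.2 ≠ i + 1 := by
      intro q hq hqp
      have hd := hdisj q hq p hp hqp
      refine ⟨hd.1, ?_, hd.2.2.1, ?_⟩ <;> omega
    have hok : ∀ a : ℕ, a ≠ i → a ≠ i + 1 → (a < i ∨ i + 2 ≤ a) := by intro a h1 h2; omega
    have hgmono : ∀ a b : ℕ, a ≠ i → a ≠ i + 1 → b ≠ i → b ≠ i + 1 → a < b → g a < g b := by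
      intro a b h1 h2 h3 h4 hab
      have := hok a h1 h2; have := hok b h3 h4
      simp only [hg]; split_ifs <;> omega
    have hginj : ∀ a b : ℕ, a ≠ i → a ≠ i + 1 → b ≠ i → b ≠ i + 1 → g a = g b → a = b := by
      intro a b h1 h2 h3 h4 hab
      have := hok a h1 h2; have := hok b h3 h4
      simp only [hg] at hab; split_ifs at hab <;> omega
    have hgget : ∀ k, k ≠ i → k ≠ i + 1 → W'[g k]? = W[k]? := by
      intro k h1 h2
      rcases hok k h1 h2 with hk | hk
      · have : g k = k := by simp only [hg, if_pos hk]
        rw [this, hW', List.getElem?_append_left (by rw [List.length_take]; omega),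
          List.getElem?_take]
        rw [if_pos hk]
      · have : g k = k - 2 := by simp only [hg]; rw [if_neg (by omega)]
        rw [this, hW', List.getElem?_append_right (by rw [List.length_take]; omega),
          List.getElem?_drop]
        congr 1
        rw [List.length_take]
        omega
    set Γ' : Set (ℕ × ℕ) := (Prod.map g g) '' (Γ \ {p}) with hΓ'
    have hG' : GoodN W' Γ' := by
      refine ⟨?_, ?_, ?_, ?_, ?_⟩
      · rintro _ ⟨q, ⟨hq, hqp⟩, rfl⟩
        have hav := havoid q hq hqp
        have hql := hlt q hq
        constructor
        · exact hgmono _ _ hav.1 hav.2.1 hav.2.2.1 hav.2.2.2 hql.1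
        · simp only [Prod.map_snd, hg, hlen']
          have := hok q.2 hav.2.2.1 hav.2.2.2
          split_ifs <;> omega
      · rintro _ ⟨q, ⟨hq, hqp⟩, rfl⟩
        have hav := havoid q hq hqp
        obtain ⟨a, c, ha, hc, hac⟩ := hinv q hq
        exact ⟨a, c, by rw [Prod.map_fst, hgget _ hav.1 hav.2.1]; exact ha,
          by rw [Prod.map_snd, hgget _ hav.2.2.1 hav.2.2.2]; exact hc, hac⟩
      · rintro _ ⟨q, ⟨hq, hqp⟩, rfl⟩ _ ⟨s, ⟨hs, hsp⟩, rfl⟩ hqs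
        have havq := havoid q hq hqp
        have havs := havoid s hs hsp
        have hqs' : q ≠ s := by rintro rfl; exact hqs rfl
        have hd := hdisj q hq s hs hqs'
        refine ⟨fun h => ?_, fun h => ?_, fun h => ?_, fun h => ?_⟩ <;>
          simp only [Prod.map_fst, Prod.map_snd] at h
        · exact hd.1 (hginj _ _ havq.1 havq.2.1 havs.1 havs.2.1 h)
        · exact hd.2.1 (hginj _ _ havq.1 havq.2.1 havs.2.2.1 havs.2.2.2 h)
        · exact hd.2.2.1 (hginj _ _ havq.2.2.1 havq.2.2.2 havs.1 havs.2.1 h)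
        · exact hd.2.2.2 (hginj _ _ havq.2.2.1 havq.2.2.2 havs.2.2.1 havs.2.2.2 h)
      · rintro _ ⟨q, ⟨hq, hqp⟩, rfl⟩ _ ⟨s, ⟨hs, hsp⟩, rfl⟩
        have havq := havoid q hq hqp
        have havs := havoid s hs hsp
        simp only [Prod.map_fst, Prod.map_snd]
        rintro ⟨h1, h2, h3⟩
        refine hnc q hq s hs ⟨?_, ?_, ?_⟩
        · rcases lt_trichotomy q.1 s.1 with h | h | h
          · exact h
          · rw [h] at h1; omega
          · exact absurd (hgmono _ _ havs.1 havs.2.1 havq.1 havq.2.1 h) (by omega)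
        · rcases lt_trichotomy s.1 q.2 with h | h | h
          · exact h
          · rw [h] at h2; omega
          · exact absurd (hgmono _ _ havq.2.2.1 havq.2.2.2 havs.1 havs.2.1 h) (by omega)
        · rcases lt_trichotomy q.2 s.2 with h | h | h
          · exact h
          · rw [h] at h3; omega
          · exact absurd (hgmono _ _ havs.2.2.1 havs.2.2.2 havq.2.2.1 havq.2.2.2 h) (by omega)
      · intro k hk
        rw [hlen'] at hk
        rcases lt_or_ge k i with hki | hki
        · obtain ⟨q, hq, hqk⟩ := hcov k (by omega)
          have hqp : q ≠ p := by
            rintro rfl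
            rcases hqk with h | h <;> omega
          refine ⟨Prod.map g g q, ⟨q, ⟨hq, hqp⟩, rfl⟩, ?_⟩
          rcases hqk with h | h
          · left; simp only [Prod.map_fst, hg, h, if_pos hki]
          · right; simp only [Prod.map_snd, hg, h, if_pos hki]
        · obtain ⟨q, hq, hqk⟩ := hcov (k + 2) (by omega)
          have hqp : q ≠ p := by
            rintro rfl
            rcases hqk with h | h <;> omega
          refine ⟨Prod.map g g q, ⟨q, ⟨hq, hqp⟩, rfl⟩, ?_⟩
          rcases hqk with h | h
          · left; simp only [Prod.map_fst, hg, h]; rw [if_neg (by omega)]; omega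
          · right; simp only [Prod.map_snd, hg, h]; rw [if_neg (by omega)]; omega
    rw [hmkeq]
    exact ih (n - 2) (by omega) W' (by omega) Γ' hG'

/-- From reducibility to the empty word, produce a full pairing. -/
lemma red_nil_goodN (W : List (Letter D)) (h : FreeGroup.Red W []) :
    ∃ Γ : Set (ℕ × ℕ), GoodN W Γ := by
  induction h using Relation.ReflTransGen.head_induction_on with
  | refl =>
    refine ⟨∅, ?_, ?_, ?_, ?_, ?_⟩ <;> simp
  | head hstep _ ih =>
    obtain ⟨Γ, hΓ⟩ := ih
    cases hstep with
    | not => exact goodN_insert _ _ _ _ Γ hΓ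

/-- A finite word represents the identity of the free group iff it carries a noncrossing
inverse pairing whose union is the whole index set. -/
theorem word_eq_one_iff_exists_ncip (W : List (Letter D)) :
    FreeGroup.mk W = 1 ↔
      ∃ Γ : Set (Fin W.length × Fin W.length), NCIP W Γ ∧
        ∀ k : Fin W.length, ∃ p ∈ Γ, p.1 = k ∨ p.2 = k := by
  classical
  constructor
  · intro h
    have hred : FreeGroup.Red W [] := by
      have h1 : FreeGroup.reduce W = [] := by
        rw [← FreeGroup.toWord_mk, h, FreeGroup.toWord_one]
      have := FreeGroup.reduce.red (L := W)
      rwa [h1] at this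
    obtain ⟨Γ, hlt, hinv, hdisj, hnc, hcov⟩ := red_nil_goodN W hred
    set Γf : Set (Fin W.length × Fin W.length) := {p | ((p.1 : ℕ), (p.2 : ℕ)) ∈ Γ} with hΓf
    have hcovf : ∀ k : Fin W.length, ∃ p ∈ Γf, p.1 = k ∨ p.2 = k := by
      intro k
      obtain ⟨p, hp, hpk⟩ := hcov k k.isLt
      have hb := hlt p hp
      refine ⟨(⟨p.1, by omega⟩, ⟨p.2, hb.2⟩), by simpa [hΓf] using hp, ?_⟩
      rcases hpk with h' | h'
      · left; exact Fin.ext h'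
      · right; exact Fin.ext h'
    refine ⟨Γf, ⟨?_, ?_, ?_, ?_, ?_⟩, hcovf⟩
    · intro p hp
      exact (hlt _ hp).1
    · intro p hp
      obtain ⟨x, y, hx, hy, hxy⟩ := hinv _ hp
      have hx' : W.get p.1 = x := by
        have := List.getElem?_eq_some_iff.mp hx
        rw [List.get_eq_getElem]; exact this.2
      have hy' : W.get p.2 = y := by
        have := List.getElem?_eq_some_iff.mp hy
        rw [List.get_eq_getElem]; exact this.2
      rw [hx', hy']; exact hxy
    · intro p hp q hq hpq
      have hne : ((p.1 : ℕ), (p.2 : ℕ)) ≠ ((q.1 : ℕ), (q.2 : ℕ)) := by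
        intro h'
        apply hpq
        obtain ⟨h1, h2⟩ := Prod.mk.injEq .. ▸ h'
        exact Prod.ext (Fin.ext h1) (Fin.ext h2)
      have hd := hdisj _ hp _ hq hne
      exact ⟨fun h' => hd.1 (congrArg Fin.val h'), fun h' => hd.2.1 (congrArg Fin.val h'),
        fun h' => hd.2.2.1 (congrArg Fin.val h'), fun h' => hd.2.2.2 (congrArg Fin.val h')⟩
    · intro p hp q hq
      exact hnc _ hp _ hq
    · intro p hp k _ _
      obtain ⟨q, hq, hqk⟩ := hcovf k
      exact ⟨q, hq, hqk⟩
  · rintro ⟨Γ, hN, hcov⟩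
    set Γn : Set (ℕ × ℕ) := (fun p : Fin W.length × Fin W.length => ((p.1 : ℕ), (p.2 : ℕ))) '' Γ
      with hΓn
    apply goodN_eq_one W.length W rfl Γn
    refine ⟨?_, ?_, ?_, ?_, ?_⟩
    · rintro _ ⟨p, hp, rfl⟩
      exact ⟨hN.lt p hp, p.2.isLt⟩
    · rintro _ ⟨p, hp, rfl⟩
      refine ⟨W.get p.1, W.get p.2, ?_, ?_, hN.inv p hp⟩
      · rw [List.get_eq_getElem, List.getElem?_eq_getElem]
      · rw [List.get_eq_getElem, List.getElem?_eq_getElem]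
    · rintro _ ⟨p, hp, rfl⟩ _ ⟨q, hq, rfl⟩ hpq
      have hpq' : p ≠ q := by rintro rfl; exact hpq rfl
      have hd := hN.disj p hp q hq hpq'
      exact ⟨fun h => hd.1 (Fin.ext h), fun h => hd.2.1 (Fin.ext h),
        fun h => hd.2.2.1 (Fin.ext h), fun h => hd.2.2.2 (Fin.ext h)⟩
    · rintro _ ⟨p, hp, rfl⟩ _ ⟨q, hq, rfl⟩ ⟨h1, h2, h3⟩
      exact hN.noncross p hp q hq ⟨h1, h2, h3⟩
    · intro k hk
      obtain ⟨p, hp, hpk⟩ := hcov ⟨k, hk⟩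
      refine ⟨((p.1 : ℕ), (p.2 : ℕ)), ⟨p, hp, rfl⟩, ?_⟩
      rcases hpk with h | h
      · left; rw [h]
      · right; rw [h]

end EarringPaper
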